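/- Let A = B + b cᵀ with B ∈ ℝ^{m×n}, and let Q_k = I − 2 Y_k T_k^{-1} Y_kᵀ and P_k = I − 2 W_k R_k^{-1} W_kᵀ be compact WY representations of products of k left and k right Householder reflectors. Then Q_kᵀ A P_k = B − [b, Y_k, B W_k] · M^{-1} · [c, Bᵀ Y_k, W_k]ᵀ, where M is the block upper-triangular matrix M = [[−1, 0, cᵀW_k], [Y_kᵀb, ½T_kᵀ, Y_kᵀBW_k], [0, 0, ½R_k]], provided M is invertible. -/

import Mathlib

open Matrix BigOperators

/-- Theorem 2.1 of the paper: applying `k` left and `k` right Householder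
reflectors in compact WY form to `A = B + b cᵀ` yields
`Qᵀ A P = B − [b, Y, BW] M⁻¹ [c, BᵀY, W]ᵀ` with the block matrix
`M = [[−1, 0, cᵀW], [Yᵀb, ½Tᵀ, YᵀBW], [0, 0, ½R]]`. -/
theorem compact_householder_lowrank_update (m n k : ℕ)
    (B : Matrix (Fin m) (Fin n) ℝ) (b : Fin m → ℝ) (c : Fin n → ℝ)
    (Y : Matrix (Fin m) (Fin k) ℝ) (W : Matrix (Fin n) (Fin k) ℝ)
    (hYunit : ∀ i : Fin k, ∑ a, (Y a i) ^ 2 = 1)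
    (hWunit : ∀ i : Fin k, ∑ a, (W a i) ^ 2 = 1)
    (T R : Matrix (Fin k) (Fin k) ℝ)
    (hT : ∀ i j : Fin k, T i j = if i = j then 1
      else if i < j then 2 * ∑ a, Y a i * Y a j else 0)
    (hR : ∀ i j : Fin k, R i j = if i = j then 1
      else if i < j then 2 * ∑ a, W a i * W a j else 0)
    (hTinv : IsUnit T.det) (hRinv : IsUnit R.det)
    (Q : Matrix (Fin m) (Fin m) ℝ) (P : Matrix (Fin n) (Fin n) ℝ)
    (hQ : Q = 1 - (2 : ℝ) • (Y * T⁻¹ * Yᵀ))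
    (hP : P = 1 - (2 : ℝ) • (W * R⁻¹ * Wᵀ))
    (U : Matrix (Fin m) (Fin 1 ⊕ (Fin k ⊕ Fin k)) ℝ)
    (hU : U = Matrix.fromCols (Matrix.of fun a (_ : Fin 1) => b a)
      (Matrix.fromCols Y (B * W)))
    (V : Matrix (Fin n) (Fin 1 ⊕ (Fin k ⊕ Fin k)) ℝ)
    (hV : V = Matrix.fromCols (Matrix.of fun a (_ : Fin 1) => c a)
      (Matrix.fromCols (Bᵀ * Y) W))
    (M : Matrix (Fin 1 ⊕ (Fin k ⊕ Fin k)) (Fin 1 ⊕ (Fin k ⊕ Fin k)) ℝ)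
    (hM : M = Matrix.fromBlocks
      (-1 : Matrix (Fin 1) (Fin 1) ℝ)
      (Matrix.fromCols (0 : Matrix (Fin 1) (Fin k) ℝ)
        (Matrix.of fun (_ : Fin 1) j => ∑ a, c a * W a j))
      (Matrix.fromRows (Matrix.of fun i (_ : Fin 1) => ∑ a, Y a i * b a)
        (0 : Matrix (Fin k) (Fin 1) ℝ))
      (Matrix.fromBlocks ((1 / 2 : ℝ) • Tᵀ) (Yᵀ * B * W)
        0 ((1 / 2 : ℝ) • R)))
    (hMinv : IsUnit M.det) :
    Qᵀ * (B + Matrix.vecMulVec b c) * P = B - U * M⁻¹ * Vᵀ := by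
  -- column vectors as 1-column matrices
  set cb : Matrix (Fin m) (Fin 1) ℝ := Matrix.of fun a _ => b a with hcb
  set cc : Matrix (Fin n) (Fin 1) ℝ := Matrix.of fun a _ => c a with hcc
  have hbc : cb * ccᵀ = Matrix.vecMulVec b c := by
    ext i j
    simp [hcb, hcc, Matrix.mul_apply, Matrix.vecMulVec]
  have hyb : (Matrix.of fun i (_ : Fin 1) => ∑ a, Y a i * b a) = Yᵀ * cb := by
    ext i j
    simp [hcb, Matrix.mul_apply]
  have hcw : (Matrix.of fun (_ : Fin 1) j => ∑ a, c a * W a j) = ccᵀ * W := by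
    ext i j
    simp [hcc, Matrix.mul_apply]
  have hTt : Tᵀ * (T⁻¹)ᵀ = 1 := by
    rw [← Matrix.transpose_mul, Matrix.nonsing_inv_mul T hTinv, Matrix.transpose_one]
  have hRR : R * R⁻¹ = 1 := Matrix.mul_nonsing_inv R hRinv
  -- the explicit inverse of M
  set N : Matrix (Fin 1 ⊕ (Fin k ⊕ Fin k)) (Fin 1 ⊕ (Fin k ⊕ Fin k)) ℝ :=
    Matrix.fromBlocks (-1)
      (Matrix.fromCols 0 ((2 : ℝ) • (ccᵀ * W * R⁻¹)))
      (Matrix.fromRows ((2 : ℝ) • ((T⁻¹)ᵀ * (Yᵀ * cb))) 0)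
      (Matrix.fromBlocks ((2 : ℝ) • (T⁻¹)ᵀ)
        ((-4 : ℝ) • ((T⁻¹)ᵀ * (Yᵀ * ((B + Matrix.vecMulVec b c) * (W * R⁻¹))))) 0
        ((2 : ℝ) • R⁻¹)) with hN
  have hMN : M * N = 1 := by
    rw [hM, hN, hyb, hcw, Matrix.fromBlocks_multiply]
    have e11 : (-1 : Matrix (Fin 1) (Fin 1) ℝ) * -1 +
        Matrix.fromCols 0 (ccᵀ * W) *
          Matrix.fromRows ((2 : ℝ) • ((T⁻¹)ᵀ * (Yᵀ * cb))) 0 = 1 := by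
      erw [Matrix.fromCols_mul_fromRows]
      simp
    have e12 : (-1 : Matrix (Fin 1) (Fin 1) ℝ) *
          Matrix.fromCols 0 ((2 : ℝ) • (ccᵀ * W * R⁻¹)) +
        Matrix.fromCols 0 (ccᵀ * W) *
          Matrix.fromBlocks ((2 : ℝ) • (T⁻¹)ᵀ)
            ((-4 : ℝ) • ((T⁻¹)ᵀ * (Yᵀ * ((B + Matrix.vecMulVec b c) * (W * R⁻¹))))) 0
            ((2 : ℝ) • R⁻¹) = 0 := by
      erw [Matrix.fromCols_mul_fromBlocks]
      simp only [Matrix.mul_zero, Matrix.zero_mul, Matrix.mul_smul, Matrix.mul_assoc,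
        add_zero, zero_add, Matrix.neg_mul, Matrix.mul_neg, Matrix.mul_one,
        Matrix.one_mul, neg_neg]
      ext x (j | j) <;> simp [Matrix.mul_assoc]
    have e21 : Matrix.fromRows (Yᵀ * cb) 0 * (-1 : Matrix (Fin 1) (Fin 1) ℝ) +
        Matrix.fromBlocks ((1 / 2 : ℝ) • Tᵀ) (Yᵀ * B * W) 0 ((1 / 2 : ℝ) • R) *
          Matrix.fromRows ((2 : ℝ) • ((T⁻¹)ᵀ * (Yᵀ * cb))) 0 = 0 := by
      erw [Matrix.fromBlocks_mul_fromRows]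
      rw [Matrix.mul_neg, Matrix.mul_one,
        neg_add_eq_zero, Matrix.fromRows_ext_iff]
      refine ⟨?_, by simp⟩
      simp only [Matrix.mul_zero, add_zero, Matrix.smul_mul, Matrix.mul_smul,
        smul_smul, ← Matrix.mul_assoc, hTt, Matrix.one_mul]
      norm_num
    have e22 : Matrix.fromRows (Yᵀ * cb) 0 *
          Matrix.fromCols 0 ((2 : ℝ) • (ccᵀ * W * R⁻¹)) +
        Matrix.fromBlocks ((1 / 2 : ℝ) • Tᵀ) (Yᵀ * B * W) 0 ((1 / 2 : ℝ) • R) *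
          Matrix.fromBlocks ((2 : ℝ) • (T⁻¹)ᵀ)
            ((-4 : ℝ) • ((T⁻¹)ᵀ * (Yᵀ * ((B + Matrix.vecMulVec b c) * (W * R⁻¹))))) 0
            ((2 : ℝ) • R⁻¹) = 1 := by
      rw [Matrix.fromRows_mul_fromCols, Matrix.fromBlocks_multiply,
        Matrix.fromBlocks_add, ← Matrix.fromBlocks_one, Matrix.fromBlocks_inj]
      refine ⟨?_, ?_, by simp, ?_⟩
      · simp only [Matrix.mul_zero, add_zero, zero_add, Matrix.smul_mul,
          Matrix.mul_smul, smul_smul, hTt]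
        norm_num
      · simp only [Matrix.mul_zero, add_zero, zero_add, Matrix.smul_mul,
          Matrix.mul_smul, smul_smul]
        rw [← Matrix.mul_assoc Tᵀ, hTt, Matrix.one_mul]
        simp only [← hbc, Matrix.mul_add, Matrix.add_mul, Matrix.mul_assoc]
        module
      · simp only [Matrix.zero_mul, Matrix.mul_zero, add_zero, zero_add,
          Matrix.smul_mul, Matrix.mul_smul, smul_smul, hRR]
        norm_num
    erw [e11, e12, e21, e22, Matrix.fromBlocks_one]
  have hMinvN : M⁻¹ = N := Matrix.inv_eq_right_inv hMN
  -- compute U * N * Vᵀ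
  rw [hMinvN, hU, hV, hQ, hP, hN]
  simp only [Matrix.transpose_fromCols, Matrix.transpose_sub, Matrix.transpose_smul,
    Matrix.transpose_mul, Matrix.transpose_one, Matrix.transpose_transpose]
  simp only [Matrix.fromCols_mul_fromBlocks, Matrix.fromCols_mul_fromRows,
    Matrix.mul_fromCols, ← hbc, Matrix.mul_add, Matrix.add_mul, Matrix.sub_mul, Matrix.mul_sub,
    Matrix.mul_one, Matrix.one_mul, Matrix.mul_neg, Matrix.neg_mul, Matrix.mul_zero,
    Matrix.zero_mul, Matrix.smul_mul, Matrix.mul_smul, smul_smul, add_zero, zero_add,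
    Matrix.mul_assoc, smul_add, smul_sub, neg_neg]
  module
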